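/- Let X be a Banach space, and let D, E ⊆ X* be norming linear subspaces each satisfying: (i) the weak* closure of every countable subset of the space is contained in it, and (ii) the space is countably tight in the weak* topology. If D ∩ E is total over X (i.e. separates points of X), then D = E. -/

import Mathlib

open NormedSpace

namespace St9Aux

open Set

noncomputable section Aux

variable {X : Type*} [NormedAddCommGroup X] [NormedSpace ℝ X]

instance : LocallyConvexSpace ℝ (WeakDual ℝ X) :=
  WeakBilin.locallyConvexSpace (B := topDualPairing ℝ X)

/-- evaluation at a point as a linear functional on the weak dual -/
def evalW (x : X) : WeakDual ℝ X →ₗ[ℝ] ℝ where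
  toFun φ := φ x
  map_add' φ ψ := rfl
  map_smul' c φ := rfl

lemma dual_weakDual (f : WeakDual ℝ X →L[ℝ] ℝ) :
    ∃ x : X, ∀ φ : WeakDual ℝ X, f φ = φ x := by
  have hb := LinearMap.hasBasis_weakBilin (topDualPairing ℝ X)
  have hnb : f ⁻¹' Metric.ball (0:ℝ) 1 ∈ nhds (0 : WeakDual ℝ X) := by
    have := f.continuous.continuousAt (x := (0 : WeakDual ℝ X))
    have h0 : f 0 = 0 := map_zero f
    exact this (by simp [h0, Metric.ball_mem_nhds (0:ℝ) one_pos])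
  obtain ⟨U, hU, hUsub⟩ := hb.mem_iff.mp hnb
  obtain ⟨s, r, hr, rfl⟩ := (SeminormFamily.basisSets_iff _).mp hU
  -- kernel inclusion
  have hker : ⨅ x : s, LinearMap.ker (evalW (X := X) (x : X)) ≤ LinearMap.ker (f : WeakDual ℝ X →ₗ[ℝ] ℝ) := by
    intro φ hφ
    simp only [Submodule.mem_iInf, LinearMap.mem_ker] at hφ ⊢
    have hφ0 : ∀ c : ℝ, (c • φ) ∈ ((s.sup (topDualPairing ℝ X).toSeminormFamily).ball 0 r) := by
      intro c
      change (s.sup (topDualPairing ℝ X).toSeminormFamily) (c • φ - 0 : WeakDual ℝ X) < r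
      rw [sub_zero]
      rcases s.eq_empty_or_nonempty with h | h
      · simp [h, hr]
        exact hr
      · apply Seminorm.finset_sup_apply_lt hr
        intro i hi
        have h0 : ((topDualPairing ℝ X).flip i) φ = 0 := hφ ⟨i, hi⟩
        show ((topDualPairing ℝ X).toSeminormFamily i) (c • φ) < r
        have : ((topDualPairing ℝ X).toSeminormFamily i) (c • φ) = ‖c‖ * ‖((topDualPairing ℝ X).flip i) φ‖ := by
          simp [LinearMap.toSeminormFamily, LinearMap.toSeminorm_apply]
          exact abs_mul c _
        rw [this, h0]
        simpa using hr
    have key : ∀ c : ℝ, |c| * |f φ| < 1 := by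
      intro c
      have := hUsub (hφ0 c)
      have this : f (c • φ) ∈ Metric.ball (0:ℝ) 1 := this
      simpa [Real.dist_eq, abs_mul] using this
    by_contra hne
    have hpos : 0 < |f φ| := abs_pos.mpr hne
    have := key (2 / |f φ|)
    rw [abs_div, abs_two, abs_abs, div_mul_cancel₀ 2 (ne_of_gt hpos)] at this
    linarith
  have hmem := mem_span_of_iInf_ker_le_ker (L := fun i : s => evalW (X := X) (i : X))
    (K := (f : WeakDual ℝ X →ₗ[ℝ] ℝ)) hker
  obtain ⟨c, hc⟩ := (Submodule.mem_span_range_iff_exists_fun ℝ).mp hmem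
  refine ⟨∑ i : s, c i • (i : X), fun φ => ?_⟩
  have := congrArg (fun g : WeakDual ℝ X →ₗ[ℝ] ℝ => g φ) hc
  simp only [LinearMap.coe_sum, Finset.sum_apply, LinearMap.smul_apply,
    ContinuousLinearMap.coe_coe] at this
  rw [← this]
  have : (φ : X →L[ℝ] ℝ) (∑ i : s, c i • (i : X)) = ∑ i : s, c i • (φ : X →L[ℝ] ℝ) (i : X) := by
    rw [map_sum]; simp
  rw [this]
  simp [evalW, smul_eq_mul]
  rfl


lemma dense_of_total (F : Submodule ℝ (X →L[ℝ] ℝ))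
    (htot : ∀ x : X, (∀ φ ∈ F, φ x = 0) → x = 0) :
    Dense (StrongDual.toWeakDual '' (F : Set (X →L[ℝ] ℝ))) := by
  set M : Submodule ℝ (WeakDual ℝ X) :=
    F.map (StrongDual.toWeakDual (𝕜 := ℝ) (E := X)).toLinearMap with hM
  have himg : (StrongDual.toWeakDual '' (F : Set (X →L[ℝ] ℝ))) = (M : Set (WeakDual ℝ X)) := by
    simp [hM, Submodule.map_coe]
  rw [himg, dense_iff_closure_eq]
  by_contra hne
  obtain ⟨ψ, hψ⟩ : ∃ ψ : WeakDual ℝ X, ψ ∉ closure (M : Set (WeakDual ℝ X)) := by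
    by_contra h
    push_neg at h
    exact hne (Set.eq_univ_of_forall h)
  obtain ⟨f, u, hfu, huψ⟩ := geometric_hahn_banach_closed_point
    (M.topologicalClosure.convex) (isClosed_closure) hψ
  have hu0 : (0:ℝ) < u := by
    have := hfu 0 (M.topologicalClosure.zero_mem)
    simpa using this
  have hf0 : ∀ a ∈ M.topologicalClosure, f a = 0 := by
    intro a ha
    by_contra hfa
    have h1 := hfu (((|u| + 1) / f a) • a) (M.topologicalClosure.smul_mem _ ha)
    rw [map_smul, smul_eq_mul, div_mul_cancel₀ _ hfa] at h1
    linarith [le_abs_self u]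
  obtain ⟨x, hx⟩ := dual_weakDual f
  have hx0 : x = 0 := by
    apply htot
    intro φ hφ
    have : (StrongDual.toWeakDual φ) ∈ (M : Set (WeakDual ℝ X)) := ⟨φ, hφ, rfl⟩
    have h := hf0 _ (M.le_topologicalClosure this)
    rw [hx] at h
    exact h
  have : f ψ = 0 := by rw [hx, hx0]; simp
  linarith

lemma aux_le (D E : Submodule ℝ (X →L[ℝ] ℝ))
    (hEcc : ∀ A : Set (WeakDual ℝ X), A ⊆ StrongDual.toWeakDual '' (E : Set (X →L[ℝ] ℝ)) →
      A.Countable → closure A ⊆ StrongDual.toWeakDual '' (E : Set (X →L[ℝ] ℝ)))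
    (hDct : ∀ A : Set (WeakDual ℝ X), A ⊆ StrongDual.toWeakDual '' (D : Set (X →L[ℝ] ℝ)) →
      ∀ p ∈ StrongDual.toWeakDual '' (D : Set (X →L[ℝ] ℝ)), p ∈ closure A →
        ∃ A₀ ⊆ A, A₀.Countable ∧ p ∈ closure A₀)
    (htotal : ∀ x : X, (∀ φ ∈ D ⊓ E, φ x = 0) → x = 0) : D ≤ E := by
  intro φ hφ
  set A : Set (WeakDual ℝ X) :=
    StrongDual.toWeakDual '' ((D ⊓ E : Submodule ℝ (X →L[ℝ] ℝ)) : Set (X →L[ℝ] ℝ)) with hA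
  have hAD : A ⊆ StrongDual.toWeakDual '' (D : Set (X →L[ℝ] ℝ)) :=
    Set.image_mono (fun x hx => ((Submodule.mem_inf).mp hx).1)
  have hAE : A ⊆ StrongDual.toWeakDual '' (E : Set (X →L[ℝ] ℝ)) :=
    Set.image_mono (fun x hx => ((Submodule.mem_inf).mp hx).2)
  have hpD : StrongDual.toWeakDual φ ∈ StrongDual.toWeakDual '' (D : Set (X →L[ℝ] ℝ)) := ⟨φ, hφ, rfl⟩
  have hpA : StrongDual.toWeakDual φ ∈ closure A := dense_of_total (D ⊓ E) htotal _
  obtain ⟨A₀, hA₀A, hcnt, hp₀⟩ := hDct A hAD _ hpD hpA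
  have := hEcc A₀ (hA₀A.trans hAE) hcnt hp₀
  obtain ⟨ψ, hψE, heq⟩ := this
  rw [StrongDual.toWeakDual_inj] at heq
  exact heq ▸ hψE

end Aux

end St9Aux


/-- `D` is norming: `x ↦ sup{|φ x|/‖φ‖ : φ ∈ D \ {0}}` is an equivalent norm. -/
def IsNorming {X : Type*} [NormedAddCommGroup X] [NormedSpace ℝ X]
    (D : Set (X →L[ℝ] ℝ)) : Prop :=
  ∃ c > (0:ℝ), ∀ x : X,
    c * ‖x‖ ≤ sSup {t : ℝ | ∃ φ ∈ D, φ ≠ 0 ∧ t = |φ x| / ‖φ‖}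

/-- if `D, E ⊆ X*` are norming linear subspaces, each weak*-countably
closed (the weak* closure of every countable subset is contained in it) and
weak*-countably tight, and `D ∩ E` separates the points of `X`, then `D = E`. -/
theorem statement9 {X : Type*} [NormedAddCommGroup X] [NormedSpace ℝ X] [CompleteSpace X]
    (D E : Submodule ℝ (X →L[ℝ] ℝ))
    (hDn : IsNorming (D : Set (X →L[ℝ] ℝ))) (hEn : IsNorming (E : Set (X →L[ℝ] ℝ)))
    (hDcc : ∀ A : Set (WeakDual ℝ X), A ⊆ StrongDual.toWeakDual '' (D : Set (X →L[ℝ] ℝ)) →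
      A.Countable → closure A ⊆ StrongDual.toWeakDual '' (D : Set (X →L[ℝ] ℝ)))
    (hEcc : ∀ A : Set (WeakDual ℝ X), A ⊆ StrongDual.toWeakDual '' (E : Set (X →L[ℝ] ℝ)) →
      A.Countable → closure A ⊆ StrongDual.toWeakDual '' (E : Set (X →L[ℝ] ℝ)))
    (hDct : ∀ A : Set (WeakDual ℝ X), A ⊆ StrongDual.toWeakDual '' (D : Set (X →L[ℝ] ℝ)) →
      ∀ p ∈ StrongDual.toWeakDual '' (D : Set (X →L[ℝ] ℝ)), p ∈ closure A →
        ∃ A₀ ⊆ A, A₀.Countable ∧ p ∈ closure A₀)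
    (hEct : ∀ A : Set (WeakDual ℝ X), A ⊆ StrongDual.toWeakDual '' (E : Set (X →L[ℝ] ℝ)) →
      ∀ p ∈ StrongDual.toWeakDual '' (E : Set (X →L[ℝ] ℝ)), p ∈ closure A →
        ∃ A₀ ⊆ A, A₀.Countable ∧ p ∈ closure A₀)
    (htotal : ∀ x : X, (∀ φ ∈ D ⊓ E, φ x = 0) → x = 0) :
    D = E := by
  exact le_antisymm
    (St9Aux.aux_le D E hEcc hDct htotal)
    (St9Aux.aux_le E D hDcc hEct
      (fun x h => htotal x (fun φ hφ => h φ (by rwa [inf_comm] at hφ))))
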